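/- Let n ≥ 1, let H be a real symmetric n×n matrix with λ_min(H) ≤ 0, let g ∈ ℝⁿ, σ > 0, and let v ∈ ℝⁿ satisfy ‖v‖ = 1, ⟨g,v⟩ ≤ 0 and Hv = λ_min(H)·v. Set s := (−λ_min(H)/σ)·v. Then −⟨g,s⟩ − (1/2)⟨s,Hs⟩ ≥ (1/2)·σ·‖s‖³. -/

import Mathlib

open RealInnerProductSpace

/-- The smallest eigenvalue of a symmetric operator on ℝⁿ, as the infimum of the
Rayleigh quotient over the unit sphere. -/
noncomputable def lamMin {n : ℕ} (T : EuclideanSpace ℝ (Fin n) → EuclideanSpace ℝ (Fin n)) : ℝ :=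
  sInf {r : ℝ | ∃ v : EuclideanSpace ℝ (Fin n), ‖v‖ = 1 ∧ ⟪v, T v⟫ = r}

/-- Lemma 4.1 of the paper, inequality (4.6): model decrease of the second-order
eigenstep `s^{so}` of the SOAN2C algorithm. -/
theorem quadratic_decrease_so_step {n : ℕ} (hn : 1 ≤ n)
    (H : Matrix (Fin n) (Fin n) ℝ) (hH : H.IsHermitian)
    (hlamneg : lamMin (fun w => Matrix.toEuclideanLin H w) ≤ 0)
    (g v : EuclideanSpace ℝ (Fin n)) (σ : ℝ) (hσ : 0 < σ)
    (hv : ‖v‖ = 1) (hgv : ⟪g, v⟫ ≤ 0)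
    (heig : Matrix.toEuclideanLin H v = lamMin (fun w => Matrix.toEuclideanLin H w) • v)
    (s : EuclideanSpace ℝ (Fin n))
    (hs : s = (-(lamMin fun w => Matrix.toEuclideanLin H w) / σ) • v) :
    -⟪g, s⟫ - (1 / 2) * ⟪s, Matrix.toEuclideanLin H s⟫ ≥ (1 / 2) * σ * ‖s‖ ^ 3 := by
  set lam := lamMin (fun w => Matrix.toEuclideanLin H w) with hlam
  set t : ℝ := -lam / σ with ht
  have htnn : 0 ≤ t := div_nonneg (by linarith) hσ.le
  have hlamt : lam = -(σ * t) := by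
    rw [ht, mul_div_assoc', mul_div_cancel_left₀ _ hσ.ne', neg_neg]
  have h1 : ⟪g, s⟫ = t * ⟪g, v⟫ := by
    rw [hs, inner_smul_right]
  have hHs : Matrix.toEuclideanLin H s = (t * lam) • v := by
    rw [hs, map_smul, heig, smul_smul]
  have h2 : ⟪s, Matrix.toEuclideanLin H s⟫ = t * (t * lam) := by
    rw [hHs, inner_smul_right, hs, real_inner_smul_left, real_inner_self_eq_norm_sq, hv]
    ring
  have h3 : ‖s‖ = t := by
    rw [hs, norm_smul, hv, mul_one, Real.norm_eq_abs, abs_of_nonneg htnn]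
  rw [h1, h2, h3]
  have hge : 0 ≤ -(t * ⟪g, v⟫) := by nlinarith
  nlinarith [mul_nonneg (mul_nonneg htnn htnn) (mul_nonneg htnn hσ.le)]
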